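/- Let k ⊆ K be a field extension where k has characteristic 2, let n ≥ 2, and let A ∈ GL(n,K). Then every entry of A·X·A⁻¹ lies in k for every X ∈ SL(n,k) (viewing X as a matrix over K via the inclusion of k into K) if and only if there exist a nonzero p ∈ K and B ∈ GL(n,k) such that A = p·B. -/

import Mathlib

open Matrix

theorem stmt_1 {k K : Type*} [Field k] [Field K] [Algebra k K] [CharP k 2]
    {n : ℕ} (hn : 2 ≤ n) (A : (Matrix (Fin n) (Fin n) K)ˣ) :
    (∀ X : Matrix (Fin n) (Fin n) k, X.det = 1 → ∀ i j : Fin n,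
        ((A : Matrix (Fin n) (Fin n) K) * X.map (algebraMap k K) *
          (↑A⁻¹ : Matrix (Fin n) (Fin n) K)) i j ∈ Set.range (algebraMap k K)) ↔
      ∃ p : K, p ≠ 0 ∧ ∃ B : (Matrix (Fin n) (Fin n) k)ˣ,
        (A : Matrix (Fin n) (Fin n) K) =
          p • (B : Matrix (Fin n) (Fin n) k).map (algebraMap k K) := by
  haveI : Nontrivial (Fin n) := Fin.nontrivial_iff_two_le.mpr hn
  set φ := algebraMap k K with hφ
  set ψ := (algebraMap k K).mapMatrix (m := Fin n) with hψ
  have hψ_apply : ∀ M : Matrix (Fin n) (Fin n) k, ψ M = M.map φ := fun M => rfl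
  set Am := (A : Matrix (Fin n) (Fin n) K) with hAm
  set Ai := (↑A⁻¹ : Matrix (Fin n) (Fin n) K) with hAi
  constructor
  · intro h
    -- the range as a subring (for closure properties)
    have hsub : ∀ x y : K, x ∈ Set.range φ → y ∈ Set.range φ → x - y ∈ Set.range φ := by
      rintro x y ⟨a, rfl⟩ ⟨b, rfl⟩; exact ⟨a - b, map_sub φ a b⟩
    -- entry computation for conjugates of std basis matrices
    have hE : ∀ (i j s t : Fin n),
        (Am * (Matrix.single i j (1 : k)).map φ * Ai) s t = Am s i * Ai j t := by
      intro i j s t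
      have hmap : (Matrix.single i j (1 : k)).map φ = Matrix.single i j (1 : K) := by
        ext a b
        simp [Matrix.single, Matrix.map_apply, apply_ite φ]
      rw [hmap, Matrix.mul_assoc, Matrix.mul_apply]
      rw [Finset.sum_eq_single i]
      · rw [single_mul_apply_same, one_mul]
      · intro a _ ha
        rw [single_mul_apply_of_ne (c := 1) i j a t ha, mul_zero]
      · intro hi; exact absurd (Finset.mem_univ i) hi
    -- the conjugate of any std basis matrix has entries in the range
    have key : ∀ (i j s t : Fin n), Am s i * Ai j t ∈ Set.range φ := by
      -- first, off-diagonal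
      have keyne : ∀ (i j s t : Fin n), i ≠ j → Am s i * Ai j t ∈ Set.range φ := by
        intro i j s t hij
        have h1 := h (transvection i j 1) (det_transvection_of_ne i j hij 1) s t
        have h0 := h 1 Matrix.det_one s t
        have hsb : Matrix.single i j (1 : k) = transvection i j 1 - 1 := by
          rw [transvection, add_sub_cancel_left]
        have : Am s i * Ai j t =
            (Am * (transvection i j (1:k)).map φ * Ai) s t - (Am * (1 : Matrix (Fin n) (Fin n) k).map φ * Ai) s t := by
          rw [← hE i j s t, hsb, ← hψ_apply, ← hψ_apply, ← hψ_apply, map_sub ψ,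
            Matrix.mul_sub, Matrix.sub_mul, Matrix.sub_apply]
        rw [this]
        exact hsub _ _ h1 h0
      intro i j s t
      rcases eq_or_ne i j with rfl | hij
      · -- diagonal case: use (1 + E_im)(1 + E_mi) = 1 + E_im + E_mi + E_ii
        obtain ⟨m, hm⟩ := exists_ne i
        have hdet : ((transvection i m 1 * transvection m i 1 : Matrix (Fin n) (Fin n) k)).det = 1 := by
          rw [Matrix.det_mul, det_transvection_of_ne i m (Ne.symm hm) 1,
            det_transvection_of_ne m i hm 1, one_mul]
        have hX := h _ hdet s t
        have h0 := h 1 Matrix.det_one s t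
        have h1 := keyne i m s t (Ne.symm hm)
        have h2 := keyne m i s t hm
        have hexp : Matrix.single i i (1 : k) =
            (transvection i m 1 * transvection m i 1) - 1 - Matrix.single i m 1
              - Matrix.single m i 1 := by
          rw [transvection, transvection, add_mul, one_mul, mul_add, mul_one,
            single_mul_single_same, mul_one]
          abel
        have : Am s i * Ai i t =
            (Am * ((transvection i m 1 * transvection m i 1 : Matrix (Fin n) (Fin n) k)).map φ * Ai) s t
              - (Am * (1 : Matrix (Fin n) (Fin n) k).map φ * Ai) s t
              - (Am * (Matrix.single i m (1:k)).map φ * Ai) s t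
              - (Am * (Matrix.single m i (1:k)).map φ * Ai) s t := by
          rw [← hE i i s t, hexp]
          simp only [← hψ_apply, map_sub ψ]
          rw [Matrix.mul_sub, Matrix.sub_mul, Matrix.sub_apply,
            Matrix.mul_sub, Matrix.sub_mul, Matrix.sub_apply,
            Matrix.mul_sub, Matrix.sub_mul, Matrix.sub_apply]
        rw [this]
        refine hsub _ _ (hsub _ _ (hsub _ _ hX h0) ?_) ?_
        · rw [hE i m s t]; exact h1
        · rw [hE m i s t]; exact h2
      · exact keyne i j s t hij
    -- A⁻¹ has a nonzero entry
    have hAidet : Ai.det ≠ 0 := by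
      have : IsUnit Ai.det := (Matrix.isUnit_iff_isUnit_det Ai).mp (A⁻¹).isUnit
      exact this.ne_zero
    have hAine : ∃ j0 t0 : Fin n, Ai j0 t0 ≠ 0 := by
      by_contra hcon
      push_neg at hcon
      have : Ai = 0 := by ext a b; exact hcon a b
      rw [this, Matrix.det_zero] at hAidet
      exact hAidet rfl
    obtain ⟨j0, t0, hq⟩ := hAine
    set q := Ai j0 t0 with hqdef
    -- build the matrix C over k with φ (C s i) = Am s i * q
    have hmem : ∀ s i : Fin n, Am s i * q ∈ Set.range φ := fun s i => key i j0 s t0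
    choose C hC using fun s i => hmem s i
    set Cm : Matrix (Fin n) (Fin n) k := Matrix.of C with hCm
    have hCmap : Cm.map φ = q • Am := by
      ext s i
      simp only [Matrix.map_apply, Matrix.smul_apply, smul_eq_mul]
      exact (hC s i).trans (mul_comm _ _)
    have hAmdet : Am.det ≠ 0 := ((Matrix.isUnit_iff_isUnit_det Am).mp A.isUnit).ne_zero
    have hCdet : Cm.det ≠ 0 := by
      intro h0
      have : (Cm.map φ).det = 0 := by
        rw [← hψ_apply, hψ, ← RingHom.map_det, h0, map_zero]
      rw [hCmap, Matrix.det_smul] at this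
      rcases mul_eq_zero.mp this with h' | h'
      · exact pow_ne_zero _ hq h'
      · exact hAmdet h'
    obtain ⟨B, hB⟩ := (Matrix.isUnit_iff_isUnit_det Cm).mpr (isUnit_iff_ne_zero.mpr hCdet)
    refine ⟨q⁻¹, inv_ne_zero hq, B, ?_⟩
    rw [hB, hCmap, smul_smul, inv_mul_cancel₀ hq, one_smul]
  · rintro ⟨p, hp, B, hAB⟩ X hX i j
    set Bm := (↑B : Matrix (Fin n) (Fin n) k).map φ with hBm
    set Bi := (↑B⁻¹ : Matrix (Fin n) (Fin n) k).map φ with hBi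
    have hAinv : Ai = p⁻¹ • Bi := by
      have hmul : Am * (p⁻¹ • Bi) = 1 := by
        rw [hAB, Matrix.smul_mul, Matrix.mul_smul, smul_smul, mul_inv_cancel₀ hp]
        rw [hBm, hBi, ← hψ_apply, ← hψ_apply, ← _root_.map_mul ψ, Units.mul_inv, _root_.map_one ψ, one_smul]
      exact Units.inv_eq_of_mul_eq_one_right hmul
    have : Am * X.map φ * Ai = (((B : Matrix (Fin n) (Fin n) k) * X * (↑B⁻¹ : Matrix (Fin n) (Fin n) k))).map φ := by
      rw [hAinv, hAB, Matrix.smul_mul, Matrix.smul_mul, Matrix.mul_smul, smul_smul,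
        mul_inv_cancel₀ hp, one_smul]
      rw [hBm, hBi, ← hψ_apply, ← hψ_apply, ← hψ_apply, ← _root_.map_mul ψ, ← _root_.map_mul ψ]
      exact hψ_apply _
    rw [this]
    exact ⟨_, rfl⟩
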